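/- Let f_w be an l-layer MPGNN (l ≥ 2) on graphs with n nodes, with a diffusion matrix P ∈ ℝ^{n×n}, nonzero weights satisfying ‖U_i‖₂ ≤ M₁ for i ∈ [l−1] and ‖W_i‖₂ ≤ M₂ for i ∈ [l], and entrywise L-Lipschitz nonlinearities φ_k, ρ_k, ψ_k with φ_k(0)=ρ_k(0)=ψ_k(0)=0. Let ΔW_1,…,ΔW_l and ΔU_1,…,ΔU_{l−1} be perturbation matrices of matching sizes, and let η = max over i of the ratios ‖ΔU_i‖₂/‖U_i‖₂ and ‖ΔW_i‖₂/‖W_i‖₂; assume η ≤ 1/l. Set τ = L³ M₂ ‖P‖₂. Then for every input graph G = (X, A): if τ = 1, then ‖f_{w+Δw}(G) − f_w(G)‖₂ ≤ e · η · L M₁ M₂ · ‖X‖₂ · (l+1)²; and if τ ≠ 1, then ‖f_{w+Δw}(G) − f_w(G)‖₂ ≤ e · η · l · L M₁ M₂ · ‖X‖₂ · (τ^{l−1} − 1)/(τ − 1). -/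

import Mathlib

open MeasureTheory Matrix Finset

noncomputable section

/-- Spectral norm of a real matrix: the operator norm induced by Euclidean vector norms. -/
def specNorm {m n : Type*} [Fintype m] [Fintype n] [DecidableEq n] (A : Matrix m n ℝ) : ℝ :=
  ‖LinearMap.toContinuousLinearMap (Matrix.toEuclideanLin A)‖

/-- Frobenius norm of a real matrix. -/
def frobNorm {m n : Type*} [Fintype m] [Fintype n] (A : Matrix m n ℝ) : ℝ :=
  Real.sqrt (∑ i, ∑ j, (A i j) ^ 2)

/-- Euclidean norm of a finite real vector. -/
def euclNorm {n : Type*} [Fintype n] (v : n → ℝ) : ℝ :=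
  Real.sqrt (∑ i, (v i) ^ 2)

/-- Node representations of an MPGNN:
`H_0 = 0`, `H_{k+1} = φ_{k+1}(X U_{k+1} + ρ_{k+1}(P ψ_{k+1}(H_k) W_{k+1}))`
(we index weights and nonlinearities from `0`, so `W k`, `U k`, `φ k`, `ρ k`, `ψ k`
are the paper's `W_{k+1}`, `U_{k+1}`, `φ_{k+1}`, `ρ_{k+1}`, `ψ_{k+1}`). -/
def mpgnnRep {n : ℕ} (d : ℕ → ℕ) (φ ρ ψ : ℕ → ℝ → ℝ)
    (W : ∀ k : ℕ, Matrix (Fin (d k)) (Fin (d (k + 1))) ℝ)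
    (U : ∀ k : ℕ, Matrix (Fin (d 0)) (Fin (d (k + 1))) ℝ)
    (P : Matrix (Fin n) (Fin n) ℝ) (X : Matrix (Fin n) (Fin (d 0)) ℝ) :
    (k : ℕ) → Matrix (Fin n) (Fin (d k)) ℝ
  | 0 => 0
  | (k + 1) =>
      (X * U k + (P * (mpgnnRep d φ ρ ψ W U P X k).map (ψ k) * W k).map (ρ k)).map (φ k)

/-- Output (readout) of an `l`-layer MPGNN: `f_w(G) = H_l = (1/n) 1_n H_{l-1} W_l`. -/
def mpgnnOut {n : ℕ} (d : ℕ → ℕ) (φ ρ ψ : ℕ → ℝ → ℝ)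
    (W : ∀ k : ℕ, Matrix (Fin (d k)) (Fin (d (k + 1))) ℝ)
    (U : ∀ k : ℕ, Matrix (Fin (d 0)) (Fin (d (k + 1))) ℝ)
    (P : Matrix (Fin n) (Fin n) ℝ) (X : Matrix (Fin n) (Fin (d 0)) ℝ) :
    (l : ℕ) → Fin (d l) → ℝ
  | 0 => fun _ => 0
  | (l + 1) => fun j => (n : ℝ)⁻¹ * ∑ i, (mpgnnRep d φ ρ ψ W U P X l * W l) i j

/-- The maximal relative size `η` of the perturbation: the maximum over all layers of
`‖ΔU_i‖₂/‖U_i‖₂` and `‖ΔW_i‖₂/‖W_i‖₂`. -/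
def etaRatio (l : ℕ) (d : ℕ → ℕ)
    (W ΔW : ∀ k : ℕ, Matrix (Fin (d k)) (Fin (d (k + 1))) ℝ)
    (U ΔU : ∀ k : ℕ, Matrix (Fin (d 0)) (Fin (d (k + 1))) ℝ) : ℝ :=
  sSup ({x | ∃ k, k < l ∧ specNorm (ΔW k) / specNorm (W k) = x} ∪
        {x | ∃ k, k < l - 1 ∧ specNorm (ΔU k) / specNorm (U k) = x})


section AuxNormLemmas

open scoped Matrix.Norms.L2Operator

set_option linter.unusedSectionVars false

variable {m n p : Type*} [Fintype m] [Fintype n] [Fintype p]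
  [DecidableEq m] [DecidableEq n] [DecidableEq p]

lemma euclNorm_eq (v : n → ℝ) : euclNorm v = ‖(EuclideanSpace.equiv n ℝ).symm v‖ := by
  rw [EuclideanSpace.norm_eq]; simp [euclNorm, sq_abs]

lemma specNorm_eq (A : Matrix m n ℝ) : specNorm A = ‖A‖ := rfl

lemma euclNorm_nonneg (v : n → ℝ) : 0 ≤ euclNorm v := Real.sqrt_nonneg _
lemma frobNorm_nonneg (A : Matrix m n ℝ) : 0 ≤ frobNorm A := Real.sqrt_nonneg _
lemma specNorm_nonneg (A : Matrix m n ℝ) : 0 ≤ specNorm A := norm_nonneg _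

lemma specNorm_pos (A : Matrix m n ℝ) (h : A ≠ 0) : 0 < specNorm A := by
  rw [specNorm_eq]; exact norm_pos_iff.mpr h

lemma specNorm_add_le (A B : Matrix m n ℝ) : specNorm (A + B) ≤ specNorm A + specNorm B := by
  rw [specNorm_eq, specNorm_eq, specNorm_eq]; exact norm_add_le A B

lemma mulVec_euclNorm_le (A : Matrix m n ℝ) (v : n → ℝ) :
    euclNorm (A *ᵥ v) ≤ specNorm A * euclNorm v := by
  rw [euclNorm_eq, euclNorm_eq, specNorm_eq]
  exact Matrix.l2_opNorm_mulVec A ((EuclideanSpace.equiv n ℝ).symm v)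

lemma frobNorm_transpose (A : Matrix m n ℝ) : frobNorm Aᵀ = frobNorm A := by
  rw [frobNorm, frobNorm, Finset.sum_comm]; rfl

lemma specNorm_transpose (A : Matrix m n ℝ) : specNorm Aᵀ = specNorm A := by
  have : Aᵀ = Aᴴ := by ext i j; simp [Matrix.conjTranspose_apply]
  rw [this, specNorm_eq, specNorm_eq]; exact Matrix.l2_opNorm_conjTranspose A

lemma sq_euclNorm (v : n → ℝ) : (euclNorm v)^2 = ∑ i, (v i)^2 :=
  Real.sq_sqrt (by positivity)

lemma frobNorm_eq_cols (A : Matrix m n ℝ) :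
    frobNorm A = Real.sqrt (∑ j, (euclNorm (fun i => A i j))^2) := by
  rw [frobNorm, Finset.sum_comm]
  congr 1; exact Finset.sum_congr rfl fun j _ => (sq_euclNorm _).symm

lemma spec_mul_frob (A : Matrix m n ℝ) (B : Matrix n p ℝ) :
    frobNorm (A * B) ≤ specNorm A * frobNorm B := by
  rw [frobNorm_eq_cols (A*B), frobNorm_eq_cols B,
    ← Real.sqrt_sq (specNorm_nonneg A), ← Real.sqrt_mul (by positivity)]
  apply Real.sqrt_le_sqrt
  rw [Finset.mul_sum]
  apply Finset.sum_le_sum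
  intro j _
  have hcol : (fun i => (A*B) i j) = A *ᵥ (fun k => B k j) := by
    ext i; simp [Matrix.mul_apply, Matrix.mulVec, dotProduct]
  calc (euclNorm fun i => (A*B) i j)^2 = (euclNorm (A *ᵥ fun k => B k j))^2 := by rw [hcol]
    _ ≤ (specNorm A * euclNorm fun k => B k j)^2 := by
        apply pow_le_pow_left₀ (by rw [euclNorm]; positivity) (mulVec_euclNorm_le A _)
    _ = specNorm A ^2 * (euclNorm fun k => B k j)^2 := by ring

lemma frob_mul_spec (A : Matrix m n ℝ) (B : Matrix n p ℝ) :
    frobNorm (A * B) ≤ frobNorm A * specNorm B := by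
  calc frobNorm (A * B) = frobNorm (A*B)ᵀ := (frobNorm_transpose _).symm
    _ = frobNorm (Bᵀ * Aᵀ) := by rw [Matrix.transpose_mul]
    _ ≤ specNorm Bᵀ * frobNorm Aᵀ := spec_mul_frob _ _
    _ = frobNorm A * specNorm B := by rw [specNorm_transpose, frobNorm_transpose]; ring

lemma col_euclNorm_le (A : Matrix m n ℝ) (j : n) :
    euclNorm (fun i => A i j) ≤ specNorm A := by
  have hcol : (fun i => A i j) = A *ᵥ (Pi.single j 1) := by
    ext i; simp [Matrix.mulVec_single]
  have h := mulVec_euclNorm_le A (Pi.single j 1)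
  have h1 : euclNorm (Pi.single j (1:ℝ)) = 1 := by
    rw [euclNorm_eq]
    have : (EuclideanSpace.equiv n ℝ).symm (Pi.single j (1:ℝ)) = EuclideanSpace.single j 1 := rfl
    rw [this, EuclideanSpace.norm_single]; norm_num
  rw [hcol]
  calc euclNorm (A *ᵥ Pi.single j 1) ≤ specNorm A * euclNorm (Pi.single j (1:ℝ)) := h
    _ = specNorm A := by rw [h1, mul_one]

lemma frob_le_sqrt_card_spec (A : Matrix m n ℝ) :
    frobNorm A ≤ Real.sqrt (Fintype.card n) * specNorm A := by
  rw [frobNorm_eq_cols, ← Real.sqrt_sq (specNorm_nonneg A), ← Real.sqrt_mul (by positivity)]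
  apply Real.sqrt_le_sqrt
  calc ∑ j, (euclNorm fun i => A i j)^2 ≤ ∑ _j : n, specNorm A ^2 :=
        Finset.sum_le_sum fun j _ => pow_le_pow_left₀ (euclNorm_nonneg _) (col_euclNorm_le A j) 2
    _ = (Fintype.card n) * specNorm A ^2 := by rw [Finset.sum_const]; simp [mul_comm]

lemma frob_le_sqrt_rows_spec (A : Matrix m n ℝ) :
    frobNorm A ≤ Real.sqrt (Fintype.card m) * specNorm A := by
  rw [← frobNorm_transpose, ← specNorm_transpose]
  exact frob_le_sqrt_card_spec Aᵀ

lemma euclNorm_add_le (v w : n → ℝ) : euclNorm (fun i => v i + w i) ≤ euclNorm v + euclNorm w := by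
  rw [euclNorm_eq, euclNorm_eq, euclNorm_eq]
  exact norm_add_le ((EuclideanSpace.equiv n ℝ).symm v) ((EuclideanSpace.equiv n ℝ).symm w)

lemma frobNorm_entrywise_le {L : ℝ} (hL : 0 ≤ L) (A : Matrix m n ℝ) (B : Matrix m n ℝ)
    (h : ∀ i j, |A i j| ≤ L * |B i j|) : frobNorm A ≤ L * frobNorm B := by
  rw [frobNorm, frobNorm, ← Real.sqrt_sq hL, ← Real.sqrt_mul (by positivity)]
  apply Real.sqrt_le_sqrt
  rw [Finset.mul_sum]
  refine Finset.sum_le_sum fun i _ => ?_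
  rw [Finset.mul_sum]
  refine Finset.sum_le_sum fun j _ => ?_
  calc (A i j)^2 = |A i j|^2 := (sq_abs _).symm
    _ ≤ (L * |B i j|)^2 := pow_le_pow_left₀ (abs_nonneg _) (h i j) 2
    _ = L^2 * (B i j)^2 := by rw [mul_pow, sq_abs]

lemma frobNorm_add_le (A B : Matrix m n ℝ) : frobNorm (A + B) ≤ frobNorm A + frobNorm B := by
  have h1 : frobNorm A = euclNorm (fun q : m × n => A q.1 q.2) := by
    rw [frobNorm, euclNorm, Fintype.sum_prod_type]
  have h2 : frobNorm B = euclNorm (fun q : m × n => B q.1 q.2) := by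
    rw [frobNorm, euclNorm, Fintype.sum_prod_type]
  have h3 : frobNorm (A + B) = euclNorm (fun q : m × n => A q.1 q.2 + B q.1 q.2) := by
    rw [frobNorm, euclNorm, Fintype.sum_prod_type]; rfl
  rw [h1, h2, h3]; exact euclNorm_add_le _ _

lemma frobNorm_zero : frobNorm (0 : Matrix m n ℝ) = 0 := by
  simp [frobNorm]

lemma frobNorm_map_sub_le {L : ℝ} {f : ℝ → ℝ} (hL : 0 ≤ L)
    (hf : ∀ x y, |f x - f y| ≤ L * |x - y|) (A B : Matrix m n ℝ) :
    frobNorm (A.map f - B.map f) ≤ L * frobNorm (A - B) := by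
  refine frobNorm_entrywise_le hL _ _ fun i j => ?_
  simpa [Matrix.sub_apply, Matrix.map_apply] using hf (A i j) (B i j)

lemma frobNorm_map_le {L : ℝ} {f : ℝ → ℝ} (hL : 0 ≤ L)
    (hf : ∀ x y, |f x - f y| ≤ L * |x - y|) (hf0 : f 0 = 0) (A : Matrix m n ℝ) :
    frobNorm (A.map f) ≤ L * frobNorm A := by
  refine frobNorm_entrywise_le hL _ _ fun i j => ?_
  have := hf (A i j) 0
  simpa [hf0, Matrix.map_apply] using this

lemma readout_le {N : ℕ} (M : Matrix (Fin N) p ℝ) :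
    euclNorm (fun j => (N:ℝ)⁻¹ * ∑ i, M i j) ≤ Real.sqrt (N:ℝ)⁻¹ * frobNorm M := by
  rw [euclNorm, frobNorm, ← Real.sqrt_mul (by positivity)]
  apply Real.sqrt_le_sqrt
  have key : ∀ j, ((N:ℝ)⁻¹ * ∑ i, M i j)^2 ≤ (N:ℝ)⁻¹ * ∑ i, (M i j)^2 := by
    intro j
    have h := sq_sum_le_card_mul_sum_sq (s := (Finset.univ : Finset (Fin N)))
      (f := fun i => M i j)
    simp only [Finset.card_univ, Fintype.card_fin] at h
    have hN : (0:ℝ) ≤ (N:ℝ)⁻¹ := by positivity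
    calc ((N:ℝ)⁻¹ * ∑ i, M i j)^2 = (N:ℝ)⁻¹ * (N:ℝ)⁻¹ * (∑ i, M i j)^2 := by ring
      _ ≤ (N:ℝ)⁻¹ * (N:ℝ)⁻¹ * ((N:ℝ) * ∑ i, (M i j)^2) := by
          apply mul_le_mul_of_nonneg_left _ (by positivity)
          exact_mod_cast h
      _ = ((N:ℝ)⁻¹ * (N:ℝ)) * ((N:ℝ)⁻¹ * ∑ i, (M i j)^2) := by ring
      _ ≤ 1 * ((N:ℝ)⁻¹ * ∑ i, (M i j)^2) := by
          apply mul_le_mul_of_nonneg_right _ (by positivity)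
          rcases Nat.eq_zero_or_pos N with h0 | h0
          · simp [h0]
          · rw [inv_mul_cancel₀ (by positivity)]
      _ = (N:ℝ)⁻¹ * ∑ i, (M i j)^2 := one_mul _
  calc ∑ j, ((N:ℝ)⁻¹ * ∑ i, M i j)^2 ≤ ∑ j, (N:ℝ)⁻¹ * ∑ i, (M i j)^2 :=
        Finset.sum_le_sum fun j _ => key j
    _ = (N:ℝ)⁻¹ * ∑ j, ∑ i, (M i j)^2 := by rw [Finset.mul_sum]
    _ = (N:ℝ)⁻¹ * ∑ i, ∑ j, (M i j)^2 := by rw [Finset.sum_comm]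

end AuxNormLemmas

set_option maxHeartbeats 1000000

/-- Perturbation bound for the output of an `l`-layer MPGNN: with
`η = max_i {‖ΔU_i‖₂/‖U_i‖₂, ‖ΔW_i‖₂/‖W_i‖₂} ≤ 1/l` and `τ = L³ M₂ ‖P‖₂`,
`‖f_{w+Δw}(G) - f_w(G)‖₂ ≤ e η L M₁ M₂ ‖X‖₂ (l+1)²` if `τ = 1`, and
`‖f_{w+Δw}(G) - f_w(G)‖₂ ≤ e η l L M₁ M₂ ‖X‖₂ (τ^{l-1}-1)/(τ-1)` if `τ ≠ 1`. -/
theorem mpgnnOut_pert_norm_le (n l : ℕ) (hl : 2 ≤ l) (d : ℕ → ℕ) (φ ρ ψ : ℕ → ℝ → ℝ)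
    (W ΔW : ∀ k : ℕ, Matrix (Fin (d k)) (Fin (d (k + 1))) ℝ)
    (U ΔU : ∀ k : ℕ, Matrix (Fin (d 0)) (Fin (d (k + 1))) ℝ)
    (L M₁ M₂ : ℝ)
    (hLipφ : ∀ k, k < l - 1 → ∀ x y : ℝ, |φ k x - φ k y| ≤ L * |x - y|)
    (hLipρ : ∀ k, k < l - 1 → ∀ x y : ℝ, |ρ k x - ρ k y| ≤ L * |x - y|)
    (hLipψ : ∀ k, k < l - 1 → ∀ x y : ℝ, |ψ k x - ψ k y| ≤ L * |x - y|)
    (hφ0 : ∀ k, k < l - 1 → φ k 0 = 0) (hρ0 : ∀ k, k < l - 1 → ρ k 0 = 0)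
    (hψ0 : ∀ k, k < l - 1 → ψ k 0 = 0)
    (hWne : ∀ k, k < l → W k ≠ 0) (hUne : ∀ k, k < l - 1 → U k ≠ 0)
    (hU : ∀ k, k < l - 1 → specNorm (U k) ≤ M₁)
    (hW : ∀ k, k < l → specNorm (W k) ≤ M₂)
    (hη : etaRatio l d W ΔW U ΔU ≤ 1 / (l : ℝ))
    (P : Matrix (Fin n) (Fin n) ℝ) (X : Matrix (Fin n) (Fin (d 0)) ℝ)
    (A : Matrix (Fin n) (Fin n) ℝ) :
    (L ^ 3 * M₂ * specNorm P = 1 →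
      euclNorm (fun j => mpgnnOut d φ ρ ψ (fun k => W k + ΔW k) (fun k => U k + ΔU k) P X l j -
          mpgnnOut d φ ρ ψ W U P X l j) ≤
        Real.exp 1 * etaRatio l d W ΔW U ΔU * L * M₁ * M₂ * specNorm X * (l + 1) ^ 2) ∧
    (L ^ 3 * M₂ * specNorm P ≠ 1 →
      euclNorm (fun j => mpgnnOut d φ ρ ψ (fun k => W k + ΔW k) (fun k => U k + ΔU k) P X l j -
          mpgnnOut d φ ρ ψ W U P X l j) ≤
        Real.exp 1 * etaRatio l d W ΔW U ΔU * l * L * M₁ * M₂ * specNorm X *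
          (((L ^ 3 * M₂ * specNorm P) ^ (l - 1) - 1) / (L ^ 3 * M₂ * specNorm P - 1))) := by
  obtain ⟨m, rfl⟩ : ∃ m, l = m + 2 := ⟨l - 2, by omega⟩
  -- basic facts about η
  set η := etaRatio (m + 2) d W ΔW U ΔU with hηdef
  have hset : ({x | ∃ k, k < m + 2 ∧ specNorm (ΔW k) / specNorm (W k) = x} ∪
        {x | ∃ k, k < m + 2 - 1 ∧ specNorm (ΔU k) / specNorm (U k) = x} : Set ℝ) =
      ↑((Finset.range (m+2)).image (fun k => specNorm (ΔW k) / specNorm (W k)) ∪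
        (Finset.range (m+2-1)).image (fun k => specNorm (ΔU k) / specNorm (U k))) := by
    ext x
    simp [Finset.mem_image, Finset.mem_range, eq_comm]
  have hbdd : BddAbove ({x | ∃ k, k < m + 2 ∧ specNorm (ΔW k) / specNorm (W k) = x} ∪
        {x | ∃ k, k < m + 2 - 1 ∧ specNorm (ΔU k) / specNorm (U k) = x} : Set ℝ) := by
    rw [hset]; exact Finset.bddAbove _
  have hηW : ∀ k, k < m + 2 → specNorm (ΔW k) / specNorm (W k) ≤ η :=
    fun k hk => le_csSup hbdd (Or.inl ⟨k, hk, rfl⟩)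
  have hηU : ∀ k, k < m + 1 → specNorm (ΔU k) / specNorm (U k) ≤ η :=
    fun k hk => le_csSup hbdd (Or.inr ⟨k, by omega, rfl⟩)
  have hη0 : 0 ≤ η :=
    le_trans (div_nonneg (specNorm_nonneg _) (specNorm_nonneg _)) (hηW 0 (by omega))
  have hΔW : ∀ k, k < m + 2 → specNorm (ΔW k) ≤ η * specNorm (W k) := by
    intro k hk
    have hpos := specNorm_pos (W k) (hWne k hk)
    exact (div_le_iff₀ hpos).mp (hηW k hk)
  have hΔU : ∀ k, k < m + 1 → specNorm (ΔU k) ≤ η * specNorm (U k) := by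
    intro k hk
    have hpos := specNorm_pos (U k) (hUne k (by omega))
    exact (div_le_iff₀ hpos).mp (hηU k hk)
  -- nonnegativity of constants
  have hL0 : 0 ≤ L := by
    have h := hLipφ 0 (by omega) 1 0
    have h2 : (0:ℝ) ≤ |φ 0 1 - φ 0 0| := abs_nonneg _
    simpa using le_trans h2 h
  have hM₁0 : 0 ≤ M₁ := le_trans (specNorm_nonneg _) (hU 0 (by omega))
  have hM₂0 : 0 ≤ M₂ := le_trans (specNorm_nonneg _) (hW 0 (by omega))
  have hP0 : 0 ≤ specNorm P := specNorm_nonneg _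
  have hX0 : 0 ≤ frobNorm X := frobNorm_nonneg _
  have hXs0 : 0 ≤ specNorm X := specNorm_nonneg _
  have hΔWb : ∀ k, k < m + 2 → specNorm (ΔW k) ≤ η * M₂ := fun k hk =>
    le_trans (hΔW k hk) (mul_le_mul_of_nonneg_left (hW k hk) hη0)
  have hΔUb : ∀ k, k < m + 1 → specNorm (ΔU k) ≤ η * M₁ := fun k hk =>
    le_trans (hΔU k hk) (mul_le_mul_of_nonneg_left (hU k (by omega)) hη0)
  have hW' : ∀ k, k < m + 2 → specNorm (W k + ΔW k) ≤ (1 + η) * M₂ := by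
    intro k hk
    calc specNorm (W k + ΔW k) ≤ specNorm (W k) + specNorm (ΔW k) := specNorm_add_le _ _
      _ ≤ M₂ + η * M₂ := add_le_add (hW k hk) (hΔWb k hk)
      _ = (1 + η) * M₂ := by ring
  have hU' : ∀ k, k < m + 1 → specNorm (U k + ΔU k) ≤ (1 + η) * M₁ := by
    intro k hk
    calc specNorm (U k + ΔU k) ≤ specNorm (U k) + specNorm (ΔU k) := specNorm_add_le _ _
      _ ≤ M₁ + η * M₁ := add_le_add (hU k (by omega)) (hΔUb k hk)
      _ = (1 + η) * M₁ := by ring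
  -- abbreviations
  set τ : ℝ := L ^ 3 * M₂ * specNorm P with hτdef
  have hτ0 : 0 ≤ τ := mul_nonneg (mul_nonneg (pow_nonneg hL0 3) hM₂0) hP0
  set τ' : ℝ := (1 + η) * τ with hτ'def
  have hτ'0 : 0 ≤ τ' := mul_nonneg (by linarith) hτ0
  have hττ' : τ ≤ τ' := by nlinarith
  set C : ℝ := L * M₁ * frobNorm X with hCdef
  have hC0 : 0 ≤ C := mul_nonneg (mul_nonneg hL0 hM₁0) hX0
  set S : ℕ → ℝ := fun k => ∑ j ∈ Finset.range k, τ' ^ j with hSdef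
  have hS0 : ∀ k, 0 ≤ S k := fun k =>
    Finset.sum_nonneg fun j _ => pow_nonneg hτ'0 j
  have hSsucc : ∀ k, S (k + 1) = τ' * S k + 1 := fun k => geom_sum_succ
  -- the key induction on layers
  have key : ∀ k, k ≤ m + 1 →
      frobNorm (mpgnnRep d φ ρ ψ W U P X k) ≤ C * S k ∧
      frobNorm (mpgnnRep d φ ρ ψ (fun k => W k + ΔW k) (fun k => U k + ΔU k) P X k) ≤
        (1 + η) * (C * S k) ∧
      frobNorm (mpgnnRep d φ ρ ψ (fun k => W k + ΔW k) (fun k => U k + ΔU k) P X k -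
        mpgnnRep d φ ρ ψ W U P X k) ≤ η * C * k * S k := by
    intro k
    induction k with
    | zero =>
      intro _
      simp only [mpgnnRep, S]
      simp [frobNorm_zero]
    | succ k ih =>
      intro hk
      have hkm : k < m + 2 - 1 := by omega
      have hkm2 : k < m + 2 := by omega
      obtain ⟨ih1, ih2, ih3⟩ := ih (by omega)
      set H := mpgnnRep d φ ρ ψ W U P X k with hHdef
      set H' := mpgnnRep d φ ρ ψ (fun k => W k + ΔW k) (fun k => U k + ΔU k) P X k with hH'def
      have eH : mpgnnRep d φ ρ ψ W U P X (k+1) =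
          (X * U k + (P * H.map (ψ k) * W k).map (ρ k)).map (φ k) := by
        rw [hHdef]; rfl
      have eH' : mpgnnRep d φ ρ ψ (fun k => W k + ΔW k) (fun k => U k + ΔU k) P X (k+1) =
          (X * (U k + ΔU k) + (P * H'.map (ψ k) * (W k + ΔW k)).map (ρ k)).map (φ k) := by
        rw [hH'def]; rfl
      have hmapψ : frobNorm (H.map (ψ k)) ≤ L * frobNorm H :=
        frobNorm_map_le hL0 (hLipψ k hkm) (hψ0 k hkm) H
      have hmapψ' : frobNorm (H'.map (ψ k)) ≤ L * frobNorm H' :=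
        frobNorm_map_le hL0 (hLipψ k hkm) (hψ0 k hkm) H'
      have hmapψd : frobNorm (H'.map (ψ k) - H.map (ψ k)) ≤ L * frobNorm (H' - H) :=
        frobNorm_map_sub_le hL0 (hLipψ k hkm) H' H
      -- bound on unperturbed H (k+1)
      have hB : frobNorm (P * H.map (ψ k) * W k) ≤ specNorm P * (L * frobNorm H) * M₂ := by
        calc frobNorm (P * H.map (ψ k) * W k)
            ≤ frobNorm (P * H.map (ψ k)) * specNorm (W k) := frob_mul_spec _ _
          _ ≤ (specNorm P * frobNorm (H.map (ψ k))) * specNorm (W k) := by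
              apply mul_le_mul_of_nonneg_right (spec_mul_frob _ _) (specNorm_nonneg _)
          _ ≤ (specNorm P * (L * frobNorm H)) * M₂ := by
              apply mul_le_mul
              · exact mul_le_mul_of_nonneg_left hmapψ hP0
              · exact hW k hkm2
              · exact specNorm_nonneg _
              · exact mul_nonneg hP0 (mul_nonneg hL0 (frobNorm_nonneg _))
      have goal1 : frobNorm (mpgnnRep d φ ρ ψ W U P X (k+1)) ≤ C * S (k+1) := by
        rw [eH]
        calc frobNorm ((X * U k + (P * H.map (ψ k) * W k).map (ρ k)).map (φ k))
            ≤ L * frobNorm (X * U k + (P * H.map (ψ k) * W k).map (ρ k)) :=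
              frobNorm_map_le hL0 (hLipφ k hkm) (hφ0 k hkm) _
          _ ≤ L * (frobNorm (X * U k) + frobNorm ((P * H.map (ψ k) * W k).map (ρ k))) :=
              mul_le_mul_of_nonneg_left (frobNorm_add_le _ _) hL0
          _ ≤ L * ((frobNorm X * M₁) + L * (specNorm P * (L * frobNorm H) * M₂)) := by
              apply mul_le_mul_of_nonneg_left _ hL0
              apply add_le_add
              · exact le_trans (frob_mul_spec _ _)
                  (mul_le_mul_of_nonneg_left (hU k hkm) hX0)
              · exact le_trans (frobNorm_map_le hL0 (hLipρ k hkm) (hρ0 k hkm) _)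
                  (mul_le_mul_of_nonneg_left hB hL0)
          _ = C + τ * frobNorm H := by rw [hCdef, hτdef]; ring
          _ ≤ C + τ' * (C * S k) := by
              have h1 : τ * frobNorm H ≤ τ' * (C * S k) :=
                mul_le_mul hττ' ih1 (frobNorm_nonneg _) hτ'0
              linarith
          _ = C * S (k+1) := by rw [hSsucc]; ring
      -- bound on perturbed H' (k+1)
      have hB' : frobNorm (P * H'.map (ψ k) * (W k + ΔW k)) ≤
          specNorm P * (L * frobNorm H') * ((1 + η) * M₂) := by
        calc frobNorm (P * H'.map (ψ k) * (W k + ΔW k))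
            ≤ frobNorm (P * H'.map (ψ k)) * specNorm (W k + ΔW k) := frob_mul_spec _ _
          _ ≤ (specNorm P * frobNorm (H'.map (ψ k))) * specNorm (W k + ΔW k) := by
              apply mul_le_mul_of_nonneg_right (spec_mul_frob _ _) (specNorm_nonneg _)
          _ ≤ (specNorm P * (L * frobNorm H')) * ((1 + η) * M₂) := by
              apply mul_le_mul
              · exact mul_le_mul_of_nonneg_left hmapψ' hP0
              · exact hW' k hkm2
              · exact specNorm_nonneg _
              · exact mul_nonneg hP0 (mul_nonneg hL0 (frobNorm_nonneg _))
      have goal2 : frobNorm (mpgnnRep d φ ρ ψ (fun k => W k + ΔW k)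
          (fun k => U k + ΔU k) P X (k+1)) ≤ (1 + η) * (C * S (k+1)) := by
        rw [eH']
        calc frobNorm ((X * (U k + ΔU k) + (P * H'.map (ψ k) * (W k + ΔW k)).map (ρ k)).map (φ k))
            ≤ L * frobNorm (X * (U k + ΔU k) + (P * H'.map (ψ k) * (W k + ΔW k)).map (ρ k)) :=
              frobNorm_map_le hL0 (hLipφ k hkm) (hφ0 k hkm) _
          _ ≤ L * (frobNorm (X * (U k + ΔU k)) +
              frobNorm ((P * H'.map (ψ k) * (W k + ΔW k)).map (ρ k))) :=
              mul_le_mul_of_nonneg_left (frobNorm_add_le _ _) hL0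
          _ ≤ L * ((frobNorm X * ((1 + η) * M₁)) +
              L * (specNorm P * (L * frobNorm H') * ((1 + η) * M₂))) := by
              apply mul_le_mul_of_nonneg_left _ hL0
              apply add_le_add
              · exact le_trans (frob_mul_spec _ _)
                  (mul_le_mul_of_nonneg_left (hU' k (by omega)) hX0)
              · exact le_trans (frobNorm_map_le hL0 (hLipρ k hkm) (hρ0 k hkm) _)
                  (mul_le_mul_of_nonneg_left hB' hL0)
          _ = (1 + η) * C + τ' * frobNorm H' := by rw [hτ'def, hCdef, hτdef]; ring
          _ ≤ (1 + η) * C + τ' * ((1 + η) * (C * S k)) :=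
              add_le_add_right (mul_le_mul_of_nonneg_left ih2 hτ'0) _
          _ = (1 + η) * (C * S (k+1)) := by rw [hSsucc]; ring
      -- bound on the difference
      have hBd : (P * H'.map (ψ k) * (W k + ΔW k)) - (P * H.map (ψ k) * W k) =
          P * H'.map (ψ k) * ΔW k + P * (H'.map (ψ k) - H.map (ψ k)) * W k := by
        simp only [Matrix.mul_add, Matrix.mul_sub, Matrix.sub_mul]
        abel
      have hp1 : frobNorm (P * H'.map (ψ k) * ΔW k) ≤
          specNorm P * (L * frobNorm H') * (η * M₂) := by
        calc frobNorm (P * H'.map (ψ k) * ΔW k)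
            ≤ frobNorm (P * H'.map (ψ k)) * specNorm (ΔW k) := frob_mul_spec _ _
          _ ≤ (specNorm P * frobNorm (H'.map (ψ k))) * specNorm (ΔW k) :=
              mul_le_mul_of_nonneg_right (spec_mul_frob _ _) (specNorm_nonneg _)
          _ ≤ (specNorm P * (L * frobNorm H')) * (η * M₂) := by
              apply mul_le_mul
              · exact mul_le_mul_of_nonneg_left hmapψ' hP0
              · exact hΔWb k hkm2
              · exact specNorm_nonneg _
              · exact mul_nonneg hP0 (mul_nonneg hL0 (frobNorm_nonneg _))
      have hp2 : frobNorm (P * (H'.map (ψ k) - H.map (ψ k)) * W k) ≤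
          specNorm P * (L * frobNorm (H' - H)) * M₂ := by
        calc frobNorm (P * (H'.map (ψ k) - H.map (ψ k)) * W k)
            ≤ frobNorm (P * (H'.map (ψ k) - H.map (ψ k))) * specNorm (W k) := frob_mul_spec _ _
          _ ≤ (specNorm P * frobNorm (H'.map (ψ k) - H.map (ψ k))) * specNorm (W k) :=
              mul_le_mul_of_nonneg_right (spec_mul_frob _ _) (specNorm_nonneg _)
          _ ≤ (specNorm P * (L * frobNorm (H' - H))) * M₂ := by
              apply mul_le_mul
              · exact mul_le_mul_of_nonneg_left hmapψd hP0
              · exact hW k hkm2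
              · exact specNorm_nonneg _
              · exact mul_nonneg hP0 (mul_nonneg hL0 (frobNorm_nonneg _))
      have hADiff : (X * (U k + ΔU k) + (P * H'.map (ψ k) * (W k + ΔW k)).map (ρ k)) -
          (X * U k + (P * H.map (ψ k) * W k).map (ρ k)) =
          X * ΔU k + ((P * H'.map (ψ k) * (W k + ΔW k)).map (ρ k) -
            (P * H.map (ψ k) * W k).map (ρ k)) := by
        simp only [Matrix.mul_add]
        abel
      have goal3 : frobNorm (mpgnnRep d φ ρ ψ (fun k => W k + ΔW k)
          (fun k => U k + ΔU k) P X (k+1) - mpgnnRep d φ ρ ψ W U P X (k+1)) ≤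
          η * C * (k+1) * S (k+1) := by
        rw [eH, eH']
        calc frobNorm ((X * (U k + ΔU k) + (P * H'.map (ψ k) * (W k + ΔW k)).map (ρ k)).map (φ k) -
              (X * U k + (P * H.map (ψ k) * W k).map (ρ k)).map (φ k))
            ≤ L * frobNorm ((X * (U k + ΔU k) + (P * H'.map (ψ k) * (W k + ΔW k)).map (ρ k)) -
              (X * U k + (P * H.map (ψ k) * W k).map (ρ k))) :=
              frobNorm_map_sub_le hL0 (hLipφ k hkm) _ _
          _ = L * frobNorm (X * ΔU k + ((P * H'.map (ψ k) * (W k + ΔW k)).map (ρ k) -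
              (P * H.map (ψ k) * W k).map (ρ k))) := by rw [hADiff]
          _ ≤ L * (frobNorm (X * ΔU k) + frobNorm ((P * H'.map (ψ k) * (W k + ΔW k)).map (ρ k) -
              (P * H.map (ψ k) * W k).map (ρ k))) :=
              mul_le_mul_of_nonneg_left (frobNorm_add_le _ _) hL0
          _ ≤ L * ((frobNorm X * (η * M₁)) +
              L * frobNorm ((P * H'.map (ψ k) * (W k + ΔW k)) - (P * H.map (ψ k) * W k))) := by
              apply mul_le_mul_of_nonneg_left _ hL0
              apply add_le_add
              · exact le_trans (frob_mul_spec _ _)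
                  (mul_le_mul_of_nonneg_left (hΔUb k (by omega)) hX0)
              · exact frobNorm_map_sub_le hL0 (hLipρ k hkm) _ _
          _ ≤ L * ((frobNorm X * (η * M₁)) +
              L * (specNorm P * (L * frobNorm H') * (η * M₂) +
                specNorm P * (L * frobNorm (H' - H)) * M₂)) := by
              apply mul_le_mul_of_nonneg_left _ hL0
              apply add_le_add_right
              apply mul_le_mul_of_nonneg_left _ hL0
              rw [hBd]
              exact le_trans (frobNorm_add_le _ _) (add_le_add hp1 hp2)
          _ = η * C + η * τ * frobNorm H' + τ * frobNorm (H' - H) := by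
              rw [hCdef, hτdef]; ring
          _ = η * C + η * (τ * frobNorm H') + τ * frobNorm (H' - H) := by ring
          _ ≤ η * C + η * (τ' * (C * S k)) + τ' * (η * C * k * S k) := by
              have h1 : τ * frobNorm H' ≤ τ' * (C * S k) := by
                calc τ * frobNorm H' ≤ τ * ((1 + η) * (C * S k)) :=
                      mul_le_mul_of_nonneg_left ih2 hτ0
                  _ = τ' * (C * S k) := by rw [hτ'def]; ring
              have h2 : τ * frobNorm (H' - H) ≤ τ' * (η * C * k * S k) :=
                mul_le_mul hττ' ih3 (frobNorm_nonneg _) hτ'0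
              exact add_le_add (add_le_add_right (mul_le_mul_of_nonneg_left h1 hη0) _) h2
          _ ≤ η * C * (k+1) * S (k+1) := by
              rw [hSsucc]
              push_cast
              nlinarith [mul_nonneg hη0 hC0, mul_nonneg (mul_nonneg hη0 hC0) (hS0 k),
                mul_nonneg hτ'0 (mul_nonneg (mul_nonneg hη0 hC0) (hS0 k)),
                mul_nonneg (Nat.cast_nonneg (α := ℝ) k) (mul_nonneg hη0 hC0),
                mul_nonneg hη0 (mul_nonneg hτ'0 (mul_nonneg (mul_nonneg hη0 hC0) (hS0 k))),
                mul_nonneg (Nat.cast_nonneg (α := ℝ) k)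
                  (mul_nonneg hτ'0 (mul_nonneg (mul_nonneg hη0 hC0) (hS0 k)))]
      refine ⟨goal1, goal2, ?_⟩
      push_cast
      exact goal3
  -- final assembly
  obtain ⟨k1, k2, k3⟩ := key (m+1) (le_refl _)
  set H1 := mpgnnRep d φ ρ ψ W U P X (m+1) with hH1def
  set H1' := mpgnnRep d φ ρ ψ (fun k => W k + ΔW k) (fun k => U k + ΔU k) P X (m+1) with hH1'def
  set D := H1' * (W (m+1) + ΔW (m+1)) - H1 * W (m+1) with hDdef
  have hout : (fun j => mpgnnOut d φ ρ ψ (fun k => W k + ΔW k) (fun k => U k + ΔU k) P X (m+2) j -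
      mpgnnOut d φ ρ ψ W U P X (m+2) j) = fun j => (n:ℝ)⁻¹ * ∑ i, D i j := by
    funext j
    have e1 : mpgnnOut d φ ρ ψ (fun k => W k + ΔW k) (fun k => U k + ΔU k) P X (m+2) j =
        (n : ℝ)⁻¹ * ∑ i, (H1' * (W (m+1) + ΔW (m+1))) i j := rfl
    have e2 : mpgnnOut d φ ρ ψ W U P X (m+2) j =
        (n : ℝ)⁻¹ * ∑ i, (H1 * W (m+1)) i j := rfl
    rw [e1, e2, hDdef]
    rw [← mul_sub, ← Finset.sum_sub_distrib]
    congr 1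
  have hk3 : frobNorm (H1' - H1) ≤ η * C * ((m:ℝ)+1) * S (m+1) := by
    have := k3; push_cast at this; exact this
  have hcnn : (0:ℝ) ≤ η * C * ((m:ℝ)+1) * S (m+1) :=
    mul_nonneg (mul_nonneg (mul_nonneg hη0 hC0) (by positivity)) (hS0 _)
  have hDd : frobNorm D ≤ (η * M₂ * C) * (S (m+1) * ((1+η) * ((m:ℝ)+1) + 1)) := by
    have hid : D = (H1' - H1) * (W (m+1) + ΔW (m+1)) + H1 * ΔW (m+1) := by
      rw [hDdef]
      simp only [Matrix.sub_mul, Matrix.mul_add]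
      abel
    calc frobNorm D ≤ frobNorm ((H1' - H1) * (W (m+1) + ΔW (m+1))) +
          frobNorm (H1 * ΔW (m+1)) := by rw [hid]; exact frobNorm_add_le _ _
      _ ≤ (η * C * ((m:ℝ)+1) * S (m+1)) * ((1+η) * M₂) + (C * S (m+1)) * (η * M₂) := by
          apply add_le_add
          · exact le_trans (frob_mul_spec _ _)
              (mul_le_mul hk3 (hW' (m+1) (by omega)) (specNorm_nonneg _) hcnn)
          · exact le_trans (frob_mul_spec _ _)
              (mul_le_mul k1 (hΔWb (m+1) (by omega)) (specNorm_nonneg _)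
                (mul_nonneg hC0 (hS0 _)))
      _ = (η * M₂ * C) * (S (m+1) * ((1+η) * ((m:ℝ)+1) + 1)) := by ring
  set T : ℝ := ∑ j ∈ Finset.range (m+1), τ ^ j with hTdef
  have hT0 : 0 ≤ T := Finset.sum_nonneg fun j _ => pow_nonneg hτ0 j
  have hST : S (m+1) ≤ (1+η)^m * T := by
    rw [hSdef, hTdef]
    simp only
    rw [Finset.mul_sum]
    apply Finset.sum_le_sum
    intro j hj
    have hjm : j ≤ m := by
      have := Finset.mem_range.mp hj; omega
    rw [hτ'def, mul_pow]
    apply mul_le_mul_of_nonneg_right _ (pow_nonneg hτ0 j)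
    exact pow_le_pow_right₀ (by linarith) hjm
  have hco : (1+η) * ((m:ℝ)+1) + 1 ≤ (1+η) * ((m:ℝ)+2) := by
    have h : (1+η) * ((m:ℝ)+2) - ((1+η) * ((m:ℝ)+1) + 1) = η := by ring
    linarith
  have hco0 : (0:ℝ) ≤ (1+η) * ((m:ℝ)+1) + 1 := by
    have : (0:ℝ) ≤ (1+η) * ((m:ℝ)+1) := mul_nonneg (by linarith) (by positivity)
    linarith
  have hcoef : S (m+1) * ((1+η) * ((m:ℝ)+1) + 1) ≤ ((1+η)^m * T) * ((1+η) * ((m:ℝ)+2)) :=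
    mul_le_mul hST hco hco0 (mul_nonneg (pow_nonneg (by linarith) m) hT0)
  have hexp : (1+η)^(m+1) ≤ Real.exp 1 := by
    have h1 : (1+η : ℝ) ≤ Real.exp η := by
      have := Real.add_one_le_exp η; linarith
    calc (1+η)^(m+1) ≤ (Real.exp η)^(m+1) := pow_le_pow_left₀ (by linarith) h1 _
      _ = Real.exp (((m:ℝ)+1) * η) := by
          rw [← Real.exp_nat_mul]; push_cast; ring_nf
      _ ≤ Real.exp 1 := by
          apply Real.exp_le_exp.mpr
          have hηb : η ≤ 1 / ((m:ℝ)+2) := by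
            have := hη; push_cast at this ⊢; linarith
          have hpos : (0:ℝ) < (m:ℝ)+2 := by positivity
          calc ((m:ℝ)+1) * η ≤ ((m:ℝ)+1) * (1 / ((m:ℝ)+2)) := by
                apply mul_le_mul_of_nonneg_left hηb (by positivity)
            _ = ((m:ℝ)+1) / ((m:ℝ)+2) := by ring
            _ ≤ 1 := by rw [div_le_one hpos]; linarith
  have hsq : Real.sqrt ((n:ℝ))⁻¹ * Real.sqrt (n:ℝ) ≤ 1 := by
    rw [← Real.sqrt_mul (by positivity)]
    have h : (n:ℝ)⁻¹ * (n:ℝ) ≤ 1 := by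
      rcases Nat.eq_zero_or_pos n with h0 | h0
      · simp [h0]
      · rw [inv_mul_cancel₀ (by positivity)]
    calc Real.sqrt ((n:ℝ)⁻¹ * n) ≤ Real.sqrt 1 := Real.sqrt_le_sqrt h
      _ = 1 := Real.sqrt_one
  have hXfr : frobNorm X ≤ Real.sqrt (n:ℝ) * specNorm X := by
    have h := frob_le_sqrt_rows_spec X
    simpa [Fintype.card_fin] using h
  have hfac2nn : (0:ℝ) ≤ η * M₂ * (L * M₁ * (Real.sqrt (n:ℝ) * specNorm X)) *
      (Real.exp 1 * ((m:ℝ)+2) * T) := by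
    apply mul_nonneg
    apply mul_nonneg (mul_nonneg hη0 hM₂0)
    · exact mul_nonneg (mul_nonneg hL0 hM₁0) (mul_nonneg (Real.sqrt_nonneg _) hXs0)
    · exact mul_nonneg (mul_nonneg (le_of_lt (Real.exp_pos 1)) (by positivity)) hT0
  have master : euclNorm (fun j =>
        mpgnnOut d φ ρ ψ (fun k => W k + ΔW k) (fun k => U k + ΔU k) P X (m+2) j -
        mpgnnOut d φ ρ ψ W U P X (m+2) j) ≤
      Real.exp 1 * η * ((m:ℝ)+2) * L * M₁ * M₂ * specNorm X * T := by
    rw [hout]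
    calc euclNorm (fun j => (n:ℝ)⁻¹ * ∑ i, D i j)
        ≤ Real.sqrt ((n:ℝ))⁻¹ * frobNorm D := readout_le D
      _ ≤ Real.sqrt ((n:ℝ))⁻¹ * ((η * M₂ * C) * (((1+η)^m * T) * ((1+η) * ((m:ℝ)+2)))) := by
          apply mul_le_mul_of_nonneg_left _ (Real.sqrt_nonneg _)
          exact le_trans hDd (mul_le_mul_of_nonneg_left hcoef
            (mul_nonneg (mul_nonneg hη0 hM₂0) hC0))
      _ = Real.sqrt ((n:ℝ))⁻¹ * (η * M₂ * (L * M₁ * frobNorm X) *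
          ((1+η)^(m+1) * ((m:ℝ)+2) * T)) := by rw [hCdef]; ring
      _ ≤ Real.sqrt ((n:ℝ))⁻¹ * (η * M₂ * (L * M₁ * (Real.sqrt (n:ℝ) * specNorm X)) *
          (Real.exp 1 * ((m:ℝ)+2) * T)) := by
          apply mul_le_mul_of_nonneg_left _ (Real.sqrt_nonneg _)
          apply mul_le_mul
          · exact mul_le_mul_of_nonneg_left
              (mul_le_mul_of_nonneg_left hXfr (mul_nonneg hL0 hM₁0))
              (mul_nonneg hη0 hM₂0)
          · exact mul_le_mul_of_nonneg_right
              (mul_le_mul_of_nonneg_right hexp (by positivity)) hT0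
          · exact mul_nonneg (mul_nonneg (pow_nonneg (by linarith) _) (by positivity)) hT0
          · exact mul_nonneg (mul_nonneg hη0 hM₂0)
              (mul_nonneg (mul_nonneg hL0 hM₁0) (mul_nonneg (Real.sqrt_nonneg _) hXs0))
      _ = (Real.sqrt ((n:ℝ))⁻¹ * Real.sqrt (n:ℝ)) *
          (η * M₂ * (L * M₁ * specNorm X) * (Real.exp 1 * ((m:ℝ)+2) * T)) := by ring
      _ ≤ 1 * (η * M₂ * (L * M₁ * specNorm X) * (Real.exp 1 * ((m:ℝ)+2) * T)) := by
          apply mul_le_mul_of_nonneg_right hsq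
          apply mul_nonneg (mul_nonneg (mul_nonneg hη0 hM₂0)
            (mul_nonneg (mul_nonneg hL0 hM₁0) hXs0))
          exact mul_nonneg (mul_nonneg (le_of_lt (Real.exp_pos 1)) (by positivity)) hT0
      _ = Real.exp 1 * η * ((m:ℝ)+2) * L * M₁ * M₂ * specNorm X * T := by ring
  have hBnn : (0:ℝ) ≤ Real.exp 1 * η * L * M₁ * M₂ * specNorm X :=
    mul_nonneg (mul_nonneg (mul_nonneg (mul_nonneg
      (mul_nonneg (le_of_lt (Real.exp_pos 1)) hη0) hL0) hM₁0) hM₂0) hXs0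
  constructor
  · intro h1
    have hT : T = (m:ℝ)+1 := by
      rw [hTdef, h1]
      simp
    refine le_trans master ?_
    rw [hT]
    push_cast
    have hm2 : ((m:ℝ)+2) * ((m:ℝ)+1) ≤ ((m:ℝ)+2+1)^2 := by nlinarith [Nat.cast_nonneg (α := ℝ) m]
    calc Real.exp 1 * η * ((m:ℝ)+2) * L * M₁ * M₂ * specNorm X * ((m:ℝ)+1)
        = (Real.exp 1 * η * L * M₁ * M₂ * specNorm X) * (((m:ℝ)+2) * ((m:ℝ)+1)) := by ring
      _ ≤ (Real.exp 1 * η * L * M₁ * M₂ * specNorm X) * (((m:ℝ)+2+1)^2) :=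
          mul_le_mul_of_nonneg_left hm2 hBnn
      _ = Real.exp 1 * η * L * M₁ * M₂ * specNorm X * ((m:ℝ)+2+1)^2 := by ring
  · intro h1
    have hgeo : (τ ^ (m + 2 - 1) - 1) / (τ - 1) = T := by
      have h21 : m + 2 - 1 = m + 1 := by omega
      rw [h21, hTdef, ← geom_sum_eq h1 (m+1)]
    rw [hgeo]
    refine le_trans master ?_
    push_cast
    exact le_of_eq (by ring)

end
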